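/- Let k be a field and set x = [[t,0],[0,0]], y = [[0,0],[0,t]], z = [[0,1],[1,0]] in the matrix ring M₂(k[t]). Then the k-subalgebra of M₂(k[t]) generated by {x, y, z} equals the subring R = { [[a(t), b(t)], [c(t), d(t)]] ∈ M₂(k[t]) : a(0) = d(0) and b(0) = c(0) }. -/

import Mathlib

open Matrix

open Polynomial in
theorem adjoin_xyz_eq_bazhenov (k : Type*) [Field k] :
    (Algebra.adjoin k
        ({Matrix.of ![![(X : k[X]), 0], ![0, 0]],
          Matrix.of ![![(0 : k[X]), 0], ![0, X]],
          Matrix.of ![![(0 : k[X]), 1], ![1, 0]]} :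
          Set (Matrix (Fin 2) (Fin 2) k[X])) : Set (Matrix (Fin 2) (Fin 2) k[X])) =
    {A : Matrix (Fin 2) (Fin 2) k[X] |
      (A 0 0).eval 0 = (A 1 1).eval 0 ∧ (A 0 1).eval 0 = (A 1 0).eval 0} := by
  set S := Algebra.adjoin k
        ({Matrix.of ![![(X : k[X]), 0], ![0, 0]],
          Matrix.of ![![(0 : k[X]), 0], ![0, X]],
          Matrix.of ![![(0 : k[X]), 1], ![1, 0]]} :
          Set (Matrix (Fin 2) (Fin 2) k[X])) with hS
  have hxe : Matrix.of ![![(X : k[X]), 0], ![0, 0]] = Matrix.single 0 0 (X : k[X]) := by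
    ext i j; fin_cases i <;> fin_cases j <;> simp [Matrix.single]
  have hye : Matrix.of ![![(0 : k[X]), 0], ![0, X]] = Matrix.single 1 1 (X : k[X]) := by
    ext i j; fin_cases i <;> fin_cases j <;> simp [Matrix.single]
  have hze : Matrix.of ![![(0 : k[X]), 1], ![1, 0]] =
      Matrix.single 0 1 (1 : k[X]) + Matrix.single 1 0 (1 : k[X]) := by
    ext i j; fin_cases i <;> fin_cases j <;> simp [Matrix.single]
  have hx : Matrix.single 0 0 (X : k[X]) ∈ S := hxe ▸ Algebra.subset_adjoin (by simp)
  have hy : Matrix.single 1 1 (X : k[X]) ∈ S := hye ▸ Algebra.subset_adjoin (by simp)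
  have hz : Matrix.single 0 1 (1 : k[X]) + Matrix.single 1 0 (1 : k[X]) ∈ S :=
    hze ▸ Algebra.subset_adjoin (by simp)
  have h01 : Matrix.single 0 1 (X : k[X]) ∈ S := by
    have := S.mul_mem hx hz
    rwa [mul_add, single_mul_single_same, single_mul_single_of_ne (h := (by decide : (0:Fin 2) ≠ 1)),
      add_zero, mul_one] at this
  have h10 : Matrix.single 1 0 (X : k[X]) ∈ S := by
    have := S.mul_mem hz hx
    rwa [add_mul, single_mul_single_same, single_mul_single_of_ne (h := (by decide : (1:Fin 2) ≠ 0)),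
      zero_add, one_mul] at this
  -- all monomials of degree ≥ 1 in all positions
  have hmono : ∀ (n : ℕ) (i j : Fin 2), Matrix.single i j ((X : k[X]) ^ (n + 1)) ∈ S := by
    intro n
    induction n with
    | zero =>
      intro i j
      fin_cases i <;> fin_cases j <;> simp only [zero_add, pow_one, Fin.zero_eta, Fin.mk_one]
      exacts [hx, h01, h10, hy]
    | succ n ih =>
      intro i j
      have hii : Matrix.single i i (X : k[X]) ∈ S := by
        fin_cases i
        · exact hx
        · exact hy
      have := S.mul_mem hii (ih i j)
      rwa [single_mul_single_same, ← pow_succ'] at this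
  -- any single-entry matrix whose entry vanishes at 0
  have hsingle : ∀ (p : k[X]), p.eval 0 = 0 → ∀ i j : Fin 2, Matrix.single i j p ∈ S := by
    intro p hp i j
    have : Matrix.single i j p = ∑ n ∈ p.support, (p.coeff n) • Matrix.single i j ((X : k[X]) ^ n) := by
      ext i' j'
      by_cases h : i = i' ∧ j = j'
      · simp only [Matrix.single, Matrix.sum_apply, Matrix.smul_apply, Matrix.of_apply,
          if_pos h, smul_ite, smul_zero, Finset.sum_ite_irrel, Finset.sum_const_zero, if_pos h]
        conv_lhs => rw [p.as_sum_support]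
        simp [Polynomial.smul_eq_C_mul, Polynomial.C_mul_X_pow_eq_monomial]
      · simp [Matrix.single, Matrix.sum_apply, if_neg h]
    rw [this]
    refine S.sum_mem fun n hn => ?_
    have hn0 : n ≠ 0 := by
      intro h; subst h
      exact (Polynomial.mem_support_iff.mp hn) (by simpa [Polynomial.eval_zero, Polynomial.coeff_zero_eq_eval_zero] using hp)
    obtain ⟨m, rfl⟩ := Nat.exists_eq_succ_of_ne_zero hn0
    exact S.smul_mem (hmono m i j) _
  rw [hS]
  ext A
  constructor
  · intro hA
    induction hA using Algebra.adjoin_induction with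
    | mem x hx =>
      simp only [Set.mem_insert_iff, Set.mem_singleton_iff] at hx
      rcases hx with rfl | rfl | rfl <;> constructor <;> simp
    | algebraMap r =>
      constructor <;> simp [Matrix.algebraMap_matrix_apply]
    | add x y hx hy ihx ihy =>
      obtain ⟨h1, h2⟩ := ihx; obtain ⟨h3, h4⟩ := ihy
      constructor <;> simp [h1, h2, h3, h4]
    | mul x y hx hy ihx ihy =>
      obtain ⟨h1, h2⟩ := ihx; obtain ⟨h3, h4⟩ := ihy
      constructor <;>
        simp only [Matrix.mul_apply, Fin.sum_univ_two, Polynomial.eval_add, Polynomial.eval_mul] <;>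
        rw [h1, h2, h3, h4] <;> ring
  · rintro ⟨h1, h2⟩
    set a := (A 0 0).eval 0 with ha
    set b := (A 0 1).eval 0 with hb
    set B := A - algebraMap k _ a - b • (Matrix.single 0 1 (1 : k[X]) + Matrix.single 1 0 (1 : k[X])) with hB
    have hAB : A = B + algebraMap k _ a + b • (Matrix.single 0 1 (1 : k[X]) + Matrix.single 1 0 (1 : k[X])) := by
      rw [hB]; abel
    have hBmem : B ∈ S := by
      rw [matrix_eq_sum_single B]
      refine S.sum_mem fun i _ => S.sum_mem fun j _ => hsingle _ ?_ i j
      fin_cases i <;> fin_cases j <;>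
        simp [hB, Matrix.algebraMap_matrix_apply, Matrix.single, Matrix.sub_apply, Matrix.smul_apply] <;>
        first
        | simp [← ha]
        | simp [← hb, h2]
        | simp [← ha, h1]
        | simp [← hb]
    rw [SetLike.mem_coe, hAB]
    exact add_mem (add_mem hBmem (Subalgebra.algebraMap_mem S a)) (S.smul_mem hz b)
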